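/- Two uniform block permutations d, d' ∈ U_k generate the same two-sided ideal (i.e., U_k d U_k = U_k d' U_k) if and only if top(d) and top(d') are set partitions of the same type. Consequently, the J-classes of U_k are in bijection with integer partitions of k. -/

import Mathlib

open Sum

/-- A set partition `d` of `[k] ∪ [k̄]` (encoded as a setoid on `Fin k ⊕ Fin k`,
top row = `inl`, bottom row = `inr`) is *uniform* if every block contains as many
top-row elements as bottom-row elements. -/
def IsUniform (k : ℕ) (d : Setoid (Fin k ⊕ Fin k)) : Prop :=
  ∀ x : Fin k ⊕ Fin k,
    {a : Fin k | d.r (.inl a) x}.ncard = {b : Fin k | d.r (.inr b) x}.ncard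

/-- Embedding of a two-row diagram into the top two rows of a three-row diagram. -/
def row12 (k : ℕ) : Fin k ⊕ Fin k → Fin k ⊕ (Fin k ⊕ Fin k) :=
  Sum.elim (fun a => .inl a) (fun b => .inr (.inl b))

/-- Embedding of a two-row diagram into the bottom two rows of a three-row diagram. -/
def row23 (k : ℕ) : Fin k ⊕ Fin k → Fin k ⊕ (Fin k ⊕ Fin k) :=
  Sum.elim (fun a => .inr (.inl a)) (fun b => .inr (.inr b))

/-- Embedding of a two-row diagram into the outer two rows of a three-row diagram. -/
def row13 (k : ℕ) : Fin k ⊕ Fin k → Fin k ⊕ (Fin k ⊕ Fin k) :=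
  Sum.elim (fun a => .inl a) (fun b => .inr (.inr b))

/-- The equivalence relation on the three-row vertex set generated by transporting
`d` along the embedding `f`. -/
def liftSetoid (k : ℕ) (f : Fin k ⊕ Fin k → Fin k ⊕ (Fin k ⊕ Fin k))
    (d : Setoid (Fin k ⊕ Fin k)) : Setoid (Fin k ⊕ (Fin k ⊕ Fin k)) :=
  Relation.EqvGen.setoid (fun x y => ∃ a b, d.r a b ∧ x = f a ∧ y = f b)

/-- The diagram product: stack `d` on top of `d'`, take connected components of the
three-row diagram, and restrict to the outer rows. -/
def ubpMul {k : ℕ} (d d' : Setoid (Fin k ⊕ Fin k)) : Setoid (Fin k ⊕ Fin k) :=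
  Setoid.comap (row13 k) (liftSetoid k (row12 k) d ⊔ liftSetoid k (row23 k) d')

/-- The identity diagram `{{1,1̄},…,{k,k̄}}`. -/
def ubpOne (k : ℕ) : Setoid (Fin k ⊕ Fin k) := Setoid.ker (Sum.elim id id)

/-- The set partition of `[k]` induced on the top row. -/
def topPart {k : ℕ} (d : Setoid (Fin k ⊕ Fin k)) : Setoid (Fin k) :=
  Setoid.comap Sum.inl d

/-- The set partition of `[k]` induced on the bottom row. -/
def botPart {k : ℕ} (d : Setoid (Fin k ⊕ Fin k)) : Setoid (Fin k) :=
  Setoid.comap Sum.inr d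

/-- The idempotent diagram `e_π = {A ∪ Ā : A ∈ π}` associated to a set partition `π` of `[k]`. -/
def ePart {k : ℕ} (π : Setoid (Fin k)) : Setoid (Fin k ⊕ Fin k) :=
  Setoid.comap (Sum.elim id id) π

/-- The diagram `{{i, σ(i)‾} : i ∈ [k]}` of a permutation `σ ∈ S_k`. -/
def permToUBP {k : ℕ} (σ : Equiv.Perm (Fin k)) : Setoid (Fin k ⊕ Fin k) :=
  Setoid.ker (Sum.elim (fun i => σ i) id)

/-- The reflection `d̃` of a diagram across a horizontal line (swap barred/unbarred). -/
def reflectUBP {k : ℕ} (d : Setoid (Fin k ⊕ Fin k)) : Setoid (Fin k ⊕ Fin k) :=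
  Setoid.comap Sum.swap d

/-- The image of a set `C ⊆ [k]` of top-row elements under the block bijection of `d`:
the set of bottom-row elements connected to some element of `C`. -/
def blockMap {k : ℕ} (d : Setoid (Fin k ⊕ Fin k)) (C : Set (Fin k)) : Set (Fin k) :=
  {j | ∃ i ∈ C, d.r (.inl i) (.inr j)}

/-- The principal two-sided ideal `U_k d U_k` generated by `d`. -/
def twoIdeal (k : ℕ) (d : Setoid (Fin k ⊕ Fin k)) : Set (Setoid (Fin k ⊕ Fin k)) :=
  {x | ∃ a b, IsUniform k a ∧ IsUniform k b ∧ x = ubpMul (ubpMul a d) b}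


section AuxGeneric
variable {α β A B C : Type*}

lemma comap_ker (f : α → β) (g : β → C) :
    Setoid.comap f (Setoid.ker g) = Setoid.ker (g ∘ f) := rfl

lemma comap_comap' (f : α → β) (g : β → C) (s : Setoid C) :
    Setoid.comap f (Setoid.comap g s) = Setoid.comap (g ∘ f) s := rfl

lemma comap_id' (s : Setoid α) : Setoid.comap id s = s := rfl

lemma comap_mono {f : α → β} {s t : Setoid β} (h : s ≤ t) :
    Setoid.comap f s ≤ Setoid.comap f t := fun _ _ hxy => h hxy

lemma exists_equiv_comp [Finite α] [Finite β] (f : α → A) (g : β → A)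
    (h : ∀ c, (f ⁻¹' {c}).ncard = (g ⁻¹' {c}).ncard) : ∃ e : α ≃ β, f = g ∘ e := by
  have E : ∀ c, { a // f a = c } ≃ { b // g b = c } := by
    intro c
    haveI : Fintype {a // f a = c} := Fintype.ofFinite _
    haveI : Fintype {b // g b = c} := Fintype.ofFinite _
    apply Fintype.equivOfCardEq
    have h1 : Nat.card { a // f a = c } = Nat.card { b // g b = c } := by
      have := h c
      rw [← Nat.card_coe_set_eq, ← Nat.card_coe_set_eq] at this
      exact this
    simpa [Nat.card_eq_fintype_card] using h1
  exact ⟨Equiv.ofFiberEquiv E, funext fun a => (Equiv.ofFiberEquiv_map E a).symm⟩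

lemma ncard_preimage_equiv (e : α ≃ β) (C : Set β) : (⇑e ⁻¹' C).ncard = C.ncard := by
  rw [← Equiv.image_symm_eq_preimage, Set.ncard_image_of_injective _ e.symm.injective]

lemma classes_comap_equiv (e : α ≃ β) (s : Setoid β) :
    (Setoid.comap ⇑e s).classes = (fun C => ⇑e ⁻¹' C) '' s.classes := by
  ext C
  constructor
  · rintro ⟨y, rfl⟩
    exact ⟨{x | s x (e y)}, ⟨e y, rfl⟩, rfl⟩
  · rintro ⟨D, ⟨y, rfl⟩, rfl⟩
    refine ⟨e.symm y, ?_⟩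
    ext x
    simp only [Set.mem_preimage, Set.mem_setOf_eq, Setoid.comap_rel, e.apply_symm_apply]

lemma classCount_comap_equiv (e : α ≃ β) (s : Setoid β) (n : ℕ) :
    {C ∈ (Setoid.comap ⇑e s).classes | C.ncard = n}.ncard
      = {C ∈ s.classes | C.ncard = n}.ncard := by
  rw [show {C ∈ (Setoid.comap ⇑e s).classes | C.ncard = n}
      = (fun C => ⇑e ⁻¹' C) '' {C ∈ s.classes | C.ncard = n} from ?_]
  · exact Set.ncard_image_of_injective _ (Set.preimage_injective.mpr e.surjective)
  · ext C
    constructor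
    · rintro ⟨hC, hn⟩
      rw [classes_comap_equiv] at hC
      obtain ⟨D, hD, rfl⟩ := hC
      exact ⟨D, ⟨hD, by rwa [ncard_preimage_equiv] at hn⟩, rfl⟩
    · rintro ⟨D, ⟨hD, hn⟩, rfl⟩
      refine ⟨by rw [classes_comap_equiv]; exact ⟨D, hD, rfl⟩, by rwa [ncard_preimage_equiv]⟩

lemma card_quot_comap_equiv (e : α ≃ β) (s : Setoid β) :
    Nat.card (Quotient (Setoid.comap ⇑e s)) = Nat.card (Quotient s) :=
  Nat.card_congr (Quotient.congr e fun _ _ => Iff.rfl)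

lemma card_quot_le [Finite α] {s t : Setoid α} (h : s ≤ t) :
    Nat.card (Quotient t) ≤ Nat.card (Quotient s) := by
  apply Nat.card_le_card_of_surjective (Quotient.map' id (fun a b hab => h hab))
  rintro ⟨x⟩
  exact ⟨Quotient.mk s x, rfl⟩

lemma setoid_eq_of_le_of_card_le [Finite α] {s t : Setoid α} (h : s ≤ t)
    (hc : Nat.card (Quotient s) ≤ Nat.card (Quotient t)) : s = t := by
  set φ : Quotient s → Quotient t := Quotient.map' id (fun a b hab => h hab) with hφ
  have hsurj : Function.Surjective φ := by rintro ⟨x⟩; exact ⟨Quotient.mk s x, rfl⟩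
  have hbij := hsurj.bijective_of_nat_card_le hc
  ext x y
  constructor
  · exact fun hs => h hs
  · intro ht
    have : φ (Quotient.mk s x) = φ (Quotient.mk s y) := Quotient.sound ht
    have := hbij.injective this
    exact Quotient.exact this

noncomputable def typeMs [Finite α] (s : Setoid α) : Multiset ℕ :=
  (Set.toFinite s.classes).toFinset.val.map Set.ncard

lemma count_typeMs [Finite α] (s : Setoid α) (n : ℕ) :
    Multiset.count n (typeMs s) = {C ∈ s.classes | C.ncard = n}.ncard := by
  classical
  rw [typeMs, Multiset.count_map]
  have h1 : {C ∈ s.classes | C.ncard = n}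
      = ↑((Set.toFinite s.classes).toFinset.filter (fun C => n = C.ncard)) := by
    ext C; simp [Set.Finite.mem_toFinset, eq_comm]
  rw [h1, Set.ncard_coe_finset]
  rw [show ((Set.toFinite s.classes).toFinset.filter (fun C => n = C.ncard)).card
    = Multiset.card (((Set.toFinite s.classes).toFinset.val).filter (fun C => n = C.ncard))
    from rfl, ← Multiset.countP_eq_card_filter]

lemma class_eq_fiber (s : Setoid α) (y : α) :
    {x | s x y} = (Quotient.mk s) ⁻¹' {Quotient.mk s y} := by
  ext x
  simp only [Set.mem_preimage, Set.mem_singleton_iff, Set.mem_setOf_eq, Quotient.eq]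

lemma fiber_injective (s : Setoid α) :
    Function.Injective (fun q : Quotient s => (Quotient.mk s) ⁻¹' {q}) := by
  intro q q' h
  simp only at h
  induction q using Quotient.ind with | _ x =>
  have hx : x ∈ (Quotient.mk s) ⁻¹' {q'} := by
    rw [← h]; simp
  exact (by simpa using hx : (⟦x⟧ : Quotient s) = q')

lemma classes_eq_range (s : Setoid α) :
    s.classes = Set.range (fun q : Quotient s => (Quotient.mk s) ⁻¹' {q}) := by
  ext C
  constructor
  · rintro ⟨y, rfl⟩; exact ⟨Quotient.mk s y, (class_eq_fiber s y).symm⟩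
  · rintro ⟨q, rfl⟩
    induction q using Quotient.ind with | _ y =>
    exact ⟨y, (class_eq_fiber s y).symm⟩

lemma classCount_eq_quotCount [Finite α] (s : Setoid α) (n : ℕ) :
    {C ∈ s.classes | C.ncard = n}.ncard
      = {q : Quotient s | ((Quotient.mk s) ⁻¹' {q}).ncard = n}.ncard := by
  rw [show {C ∈ s.classes | C.ncard = n}
      = (fun q : Quotient s => (Quotient.mk s) ⁻¹' {q}) ''
          {q : Quotient s | ((Quotient.mk s) ⁻¹' {q}).ncard = n} from ?_]
  · exact Set.ncard_image_of_injective _ (fiber_injective s)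
  · ext C
    constructor
    · rintro ⟨hC, hn⟩
      rw [classes_eq_range] at hC
      obtain ⟨q, rfl⟩ := hC
      exact ⟨q, hn, rfl⟩
    · rintro ⟨q, hq, rfl⟩
      exact ⟨by rw [classes_eq_range]; exact ⟨q, rfl⟩, hq⟩

lemma typeMs_comap_equiv [Finite α] [Finite β] (e : α ≃ β) (s : Setoid β) :
    typeMs (Setoid.comap ⇑e s) = typeMs s := Multiset.ext.mpr fun n => by
  rw [count_typeMs, count_typeMs, classCount_comap_equiv]

lemma exists_comap_eq [Finite α] {s t : Setoid α}
    (h : ∀ n, {C ∈ s.classes | C.ncard = n}.ncard = {C ∈ t.classes | C.ncard = n}.ncard) :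
    ∃ e : Equiv.Perm α, Setoid.comap ⇑e s = t := by
  set szs : Quotient s → ℕ := fun q => ((Quotient.mk s) ⁻¹' {q}).ncard with hszs
  set szt : Quotient t → ℕ := fun q => ((Quotient.mk t) ⁻¹' {q}).ncard with hszt
  obtain ⟨γ, hγ⟩ : ∃ γ : Quotient s ≃ Quotient t, szs = szt ∘ γ := by
    apply exists_equiv_comp
    intro n
    have h1 := classCount_eq_quotCount s n
    have h2 := classCount_eq_quotCount t n
    have : {q : Quotient s | szs q = n}.ncard = {q : Quotient t | szt q = n}.ncard := by
      rw [← h1, ← h2]; exact h n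
    simpa [Set.preimage, Set.mem_singleton_iff] using this
  obtain ⟨e, he⟩ : ∃ e : α ≃ α, (Quotient.mk t) = (γ ∘ Quotient.mk s) ∘ e := by
    apply exists_equiv_comp
    intro q
    have h1 : (γ ∘ Quotient.mk s) ⁻¹' {q} = (Quotient.mk s) ⁻¹' {γ.symm q} := by
      ext i; simp [Equiv.eq_symm_apply, eq_comm]
    rw [h1]
    have := congrFun hγ (γ.symm q)
    simp only [hszs, hszt, Function.comp_apply, Equiv.apply_symm_apply] at this
    rw [this]
  refine ⟨e, ?_⟩
  ext x y
  have hx := congrFun he x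
  have hy := congrFun he y
  constructor
  · intro hrel
    have hrel' : s (e x) (e y) := hrel
    have : Quotient.mk s (e x) = Quotient.mk s (e y) := Quotient.sound hrel'
    have : Quotient.mk t x = Quotient.mk t y := by
      rw [hx, hy]; simp [this]
    exact Quotient.exact this
  · intro hrel
    have h2 : Quotient.mk t x = Quotient.mk t y := Quotient.sound hrel
    rw [hx, hy] at h2
    simp only [Function.comp_apply] at h2
    show s (e x) (e y)
    exact Quotient.exact (γ.injective h2)

end AuxGeneric

section UBP
variable {k : ℕ} {A B C : Type*}

lemma setoid_eq_ker (d : Setoid (Fin k ⊕ Fin k)) :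
    d = Setoid.ker (Sum.elim (fun i => Quotient.mk d (Sum.inl i))
          (fun i => Quotient.mk d (Sum.inr i))) := by
  ext x y
  rw [Setoid.ker_def]
  have hx : Sum.elim (fun i => Quotient.mk d (Sum.inl i)) (fun i => Quotient.mk d (Sum.inr i)) x
      = Quotient.mk d x := by cases x <;> rfl
  have hy : Sum.elim (fun i => Quotient.mk d (Sum.inl i)) (fun i => Quotient.mk d (Sum.inr i)) y
      = Quotient.mk d y := by cases y <;> rfl
  rw [hx, hy, Quotient.eq]

lemma isUniform_ker_iff (f g : Fin k → A) :
    IsUniform k (Setoid.ker (Sum.elim f g)) ↔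
      ∀ c, (f ⁻¹' {c}).ncard = (g ⁻¹' {c}).ncard := by
  constructor
  · intro hu c
    by_cases hc : ∃ a, f a = c
    · obtain ⟨a, rfl⟩ := hc
      exact hu (Sum.inl a)
    · by_cases hc' : ∃ b, g b = c
      · obtain ⟨b, rfl⟩ := hc'
        exact hu (Sum.inr b)
      · have h1 : f ⁻¹' {c} = ∅ := by
          ext a; simp only [Set.mem_preimage, Set.mem_singleton_iff, Set.mem_empty_iff_false,
            iff_false]
          exact fun h => hc ⟨a, h⟩
        have h2 : g ⁻¹' {c} = ∅ := by
          ext b; simp only [Set.mem_preimage, Set.mem_singleton_iff, Set.mem_empty_iff_false,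
            iff_false]
          exact fun h => hc' ⟨b, h⟩
        rw [h1, h2]
  · intro hf x
    exact hf (Sum.elim f g x)

lemma ubpMul_ker (f g : Fin k → A) (h l : Fin k → B) (P F U : Fin k → C)
    (hP : Setoid.ker P = Setoid.ker g ⊔ Setoid.ker h)
    (hf : ∀ t, ∃ i, g i = f t) (hl : ∀ y, ∃ i, h i = l y)
    (hF : ∀ t i, g i = f t → F t = P i)
    (hU : ∀ y i, h i = l y → U y = P i) :
    ubpMul (Setoid.ker (Sum.elim f g)) (Setoid.ker (Sum.elim h l))
      = Setoid.ker (Sum.elim F (Sum.elim P U) ∘ row13 k) := by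
  set Ψ : Fin k ⊕ (Fin k ⊕ Fin k) → C := Sum.elim F (Sum.elim P U) with hΨ
  have kg : ∀ i j, g i = g j → P i = P j := by
    intro i j hij
    have : Setoid.ker g ≤ Setoid.ker P := hP ▸ le_sup_left
    exact this hij
  have kh : ∀ i j, h i = h j → P i = P j := by
    intro i j hij
    have : Setoid.ker h ≤ Setoid.ker P := hP ▸ le_sup_right
    exact this hij
  set J := liftSetoid k (row12 k) (Setoid.ker (Sum.elim f g))
      ⊔ liftSetoid k (row23 k) (Setoid.ker (Sum.elim h l)) with hJ
  have key : J = Setoid.ker Ψ := by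
    apply le_antisymm
    · apply sup_le
      · apply Setoid.eqvGen_le
        rintro x y ⟨u, v, huv, rfl, rfl⟩
        cases u with
        | inl t =>
          cases v with
          | inl t' =>
            obtain ⟨i, hi⟩ := hf t
            have huv' : f t = f t' := huv
            have hi' : g i = f t' := by rw [hi, huv']
            show F t = F t'
            rw [hF t i hi, hF t' i hi']
          | inr j =>
            exact hF t j (Eq.symm huv)
        | inr i =>
          cases v with
          | inl t => exact (hF t i huv).symm
          | inr j => exact kg i j huv
      · apply Setoid.eqvGen_le
        rintro x y ⟨u, v, huv, rfl, rfl⟩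
        cases u with
        | inl i =>
          cases v with
          | inl j => exact kh i j huv
          | inr y => exact (hU y i huv).symm
        | inr y =>
          cases v with
          | inl i => exact hU y i (Eq.symm huv)
          | inr y' =>
            obtain ⟨i, hi⟩ := hl y
            have hi' : h i = l y' := by rw [hi]; exact huv
            show U y = U y'
            rw [hU y i hi, hU y' i hi']
    · have hc1 : ∀ z : Fin k ⊕ (Fin k ⊕ Fin k),
          ∃ i, J z (Sum.inr (Sum.inl i)) ∧ Ψ z = P i := by
        intro z
        match z with
        | Sum.inl t =>
          obtain ⟨i, hi⟩ := hf t
          refine ⟨i, ?_, hF t i hi⟩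
          have := (le_sup_left :
            liftSetoid k (row12 k) (Setoid.ker (Sum.elim f g)) ≤ J)
          exact this (Relation.EqvGen.rel _ _
            ⟨Sum.inl t, Sum.inr i, (Eq.symm hi : Sum.elim f g (Sum.inl t) = Sum.elim f g (Sum.inr i)), rfl, rfl⟩)
        | Sum.inr (Sum.inl i) => exact ⟨i, J.refl' _, rfl⟩
        | Sum.inr (Sum.inr y) =>
          obtain ⟨i, hi⟩ := hl y
          refine ⟨i, ?_, hU y i hi⟩
          have := (le_sup_right :
            liftSetoid k (row23 k) (Setoid.ker (Sum.elim h l)) ≤ J)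
          exact this (Relation.EqvGen.rel _ _
            ⟨Sum.inr y, Sum.inl i, (Eq.symm hi : Sum.elim h l (Sum.inr y) = Sum.elim h l (Sum.inl i)), rfl, rfl⟩)
      have hc2 : ∀ i j, P i = P j → J (Sum.inr (Sum.inl i)) (Sum.inr (Sum.inl j)) := by
        intro i j hij
        have h2 : (Setoid.ker g ⊔ Setoid.ker h) i j := by rw [← hP]; exact hij
        rw [Setoid.sup_eq_eqvGen] at h2
        have h3 : Relation.EqvGen (fun x y => Setoid.ker g x y ∨ Setoid.ker h x y) i j := h2
        clear h2 hij
        induction h3 with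
        | rel x y hxy =>
          rcases hxy with hg | hh
          · exact (le_sup_left :
              liftSetoid k (row12 k) (Setoid.ker (Sum.elim f g)) ≤ J)
              (Relation.EqvGen.rel _ _ ⟨Sum.inr x, Sum.inr y, hg, rfl, rfl⟩)
          · exact (le_sup_right :
              liftSetoid k (row23 k) (Setoid.ker (Sum.elim h l)) ≤ J)
              (Relation.EqvGen.rel _ _ ⟨Sum.inl x, Sum.inl y, hh, rfl, rfl⟩)
        | refl x => exact J.refl' _
        | symm x y _ ih => exact J.symm' ih
        | trans x y z _ _ ih1 ih2 => exact J.trans' ih1 ih2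
      intro x y hxy
      obtain ⟨i, hJi, hΨi⟩ := hc1 x
      obtain ⟨j, hJj, hΨj⟩ := hc1 y
      have : P i = P j := by rw [← hΨi, ← hΨj]; exact hxy
      exact J.trans' hJi (J.trans' (hc2 i j this) (J.symm' hJj))
  rw [ubpMul, ← hJ, key, comap_ker]

lemma ker_row13 (F P U : Fin k → C) :
    Setoid.ker (Sum.elim F (Sum.elim P U) ∘ row13 k) = Setoid.ker (Sum.elim F U) := by
  congr 1
  funext z
  cases z <;> rfl

lemma ker_elim_inl (F U : Fin k → C) :
    Setoid.comap Sum.inl (Setoid.ker (Sum.elim F U)) = Setoid.ker F := by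
  rw [comap_ker]; congr 1

lemma ker_elim_inr (F U : Fin k → C) :
    Setoid.comap Sum.inr (Setoid.ker (Sum.elim F U)) = Setoid.ker U := by
  rw [comap_ker]; congr 1

lemma ker_mk (s : Setoid α) : Setoid.ker (Quotient.mk s) = s := by
  ext x y
  rw [Setoid.ker_def, Quotient.eq]

lemma uniform_fibers {a : Setoid (Fin k ⊕ Fin k)} (ha : IsUniform k a) :
    ∀ c, ((fun i => Quotient.mk a (Sum.inl i)) ⁻¹' {c}).ncard
       = ((fun i => Quotient.mk a (Sum.inr i)) ⁻¹' {c}).ncard := by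
  intro c
  induction c using Quotient.ind with | _ z =>
  have h1 : (fun i => Quotient.mk a (Sum.inl i)) ⁻¹' {Quotient.mk a z}
      = {i | a.r (Sum.inl i) z} := by
    ext i
    simp only [Set.mem_preimage, Set.mem_singleton_iff, Set.mem_setOf_eq, Quotient.eq]
  have h2 : (fun i => Quotient.mk a (Sum.inr i)) ⁻¹' {Quotient.mk a z}
      = {i | a.r (Sum.inr i) z} := by
    ext i
    simp only [Set.mem_preimage, Set.mem_singleton_iff, Set.mem_setOf_eq, Quotient.eq]
  rw [show (Quotient.mk a z : Quotient a) = ⟦z⟧ from rfl] at h1 h2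
  rw [h1, h2]
  exact ha z

lemma uniform_link_top {a : Setoid (Fin k ⊕ Fin k)} (ha : IsUniform k a)
    (z : Fin k ⊕ Fin k) : ∃ i, a.r (Sum.inr i) z := by
  cases z with
  | inr y => exact ⟨y, a.refl' _⟩
  | inl t =>
    have h := ha (Sum.inl t)
    have hpos : 0 < {b : Fin k | a.r (Sum.inr b) (Sum.inl t)}.ncard := by
      rw [← h, Set.ncard_pos (Set.toFinite _)]
      exact ⟨t, a.refl' _⟩
    rw [Set.ncard_pos (Set.toFinite _)] at hpos
    exact hpos

lemma uniform_link_bot {a : Setoid (Fin k ⊕ Fin k)} (ha : IsUniform k a)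
    (z : Fin k ⊕ Fin k) : ∃ i, a.r (Sum.inl i) z := by
  cases z with
  | inl t => exact ⟨t, a.refl' _⟩
  | inr y =>
    have h := ha (Sum.inr y)
    have hpos : 0 < {b : Fin k | a.r (Sum.inl b) (Sum.inr y)}.ncard := by
      rw [h, Set.ncard_pos (Set.toFinite _)]
      exact ⟨y, a.refl' _⟩
    rw [Set.ncard_pos (Set.toFinite _)] at hpos
    exact hpos

lemma ubpMul_spec {a d : Setoid (Fin k ⊕ Fin k)} (ha : IsUniform k a) (hd : IsUniform k d) :
    ∃ σ τ : Equiv.Perm (Fin k),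
      IsUniform k (ubpMul a d)
      ∧ topPart (ubpMul a d) = Setoid.comap ⇑σ (botPart a ⊔ topPart d)
      ∧ botPart (ubpMul a d) = Setoid.comap ⇑τ (botPart a ⊔ topPart d) := by
  classical
  set M := botPart a ⊔ topPart d with hM
  set f : Fin k → Quotient a := fun i => Quotient.mk a (Sum.inl i) with hfdef
  set g : Fin k → Quotient a := fun i => Quotient.mk a (Sum.inr i) with hgdef
  set h : Fin k → Quotient d := fun i => Quotient.mk d (Sum.inl i) with hhdef
  set l : Fin k → Quotient d := fun i => Quotient.mk d (Sum.inr i) with hldef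
  obtain ⟨σ, hσ⟩ := exists_equiv_comp f g (uniform_fibers ha)
  obtain ⟨τ, hτ⟩ := exists_equiv_comp l h (fun c => (uniform_fibers hd c).symm)
  have hbg : botPart a = Setoid.ker g := by
    ext i j
    rw [Setoid.ker_def]
    show a (Sum.inr i) (Sum.inr j) ↔ _
    rw [hgdef]
    exact (Quotient.eq (r := a)).symm
  have hth : topPart d = Setoid.ker h := by
    ext i j
    rw [Setoid.ker_def]
    show d (Sum.inl i) (Sum.inl j) ↔ _
    rw [hhdef]
    exact (Quotient.eq (r := d)).symm
  have hP : Setoid.ker (Quotient.mk M) = Setoid.ker g ⊔ Setoid.ker h := by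
    rw [← hbg, ← hth, ← hM]
    ext x y
    rw [Setoid.ker_def, Quotient.eq]
  have hf : ∀ t, ∃ i, g i = f t := by
    intro t
    obtain ⟨i, hi⟩ := uniform_link_top ha (Sum.inl t)
    exact ⟨i, Quotient.sound hi⟩
  have hl : ∀ y, ∃ i, h i = l y := by
    intro y
    obtain ⟨i, hi⟩ := uniform_link_bot hd (Sum.inr y)
    exact ⟨i, Quotient.sound hi⟩
  have hF : ∀ t i, g i = f t → (Quotient.mk M ∘ ⇑σ) t = Quotient.mk M i := by
    intro t i hgi
    have h1 : g i = g (σ t) := by rw [hgi, hσ]; rfl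
    have h2 : a (Sum.inr i) (Sum.inr (σ t)) := Quotient.exact h1
    exact Quotient.sound (le_sup_left (α := Setoid (Fin k)) (a.symm' h2) : M (σ t) i)
  have hU : ∀ y i, h i = l y → (Quotient.mk M ∘ ⇑τ) y = Quotient.mk M i := by
    intro y i hhi
    have h1 : h i = h (τ y) := by rw [hhi, hτ]; rfl
    have h2 : d (Sum.inl i) (Sum.inl (τ y)) := Quotient.exact h1
    exact Quotient.sound (le_sup_right (α := Setoid (Fin k)) (d.symm' h2) : M (τ y) i)
  have hprod : ubpMul a d
      = Setoid.ker (Sum.elim (Quotient.mk M ∘ ⇑σ) (Quotient.mk M ∘ ⇑τ)) := by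
    conv_lhs => rw [setoid_eq_ker a, setoid_eq_ker d]
    rw [ubpMul_ker f g h l (Quotient.mk M) (Quotient.mk M ∘ ⇑σ) (Quotient.mk M ∘ ⇑τ)
      hP hf hl hF hU, ker_row13]
  refine ⟨σ, τ, ?_, ?_, ?_⟩
  · rw [hprod, isUniform_ker_iff]
    intro c
    have e1 : (Quotient.mk M ∘ ⇑σ) ⁻¹' {c} = ⇑σ ⁻¹' (Quotient.mk M ⁻¹' {c}) := rfl
    have e2 : (Quotient.mk M ∘ ⇑τ) ⁻¹' {c} = ⇑τ ⁻¹' (Quotient.mk M ⁻¹' {c}) := rfl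
    rw [e1, e2, ncard_preimage_equiv, ncard_preimage_equiv]
  · rw [hprod]
    show Setoid.comap Sum.inl _ = _
    rw [ker_elim_inl, show Quotient.mk M ∘ ⇑σ = Quotient.mk M ∘ ⇑σ from rfl,
      ← comap_ker ⇑σ (Quotient.mk M), ker_mk]
  · rw [hprod]
    show Setoid.comap Sum.inr _ = _
    rw [ker_elim_inr, ← comap_ker ⇑τ (Quotient.mk M), ker_mk]

lemma mem_twoIdeal_iff {d x : Setoid (Fin k ⊕ Fin k)} (hd : IsUniform k d) :
    x ∈ twoIdeal k d ↔ IsUniform k x ∧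
      ∃ e : Equiv.Perm (Fin k), Setoid.comap ⇑e (topPart d) ≤ topPart x := by
  constructor
  · rintro ⟨a, b, ha, hb, rfl⟩
    obtain ⟨σ1, τ1, hu1, ht1, hb1⟩ := ubpMul_spec ha hd
    obtain ⟨σ2, τ2, hu2, ht2, hb2⟩ := ubpMul_spec hu1 hb
    refine ⟨hu2, σ2.trans τ1, ?_⟩
    rw [ht2]
    have h1 : Setoid.comap ⇑τ1 (topPart d) ≤ botPart (ubpMul a d) := by
      rw [hb1]; exact comap_mono le_sup_right
    have h2 : Setoid.comap ⇑σ2 (Setoid.comap ⇑τ1 (topPart d))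
        ≤ Setoid.comap ⇑σ2 (botPart (ubpMul a d) ⊔ topPart b) :=
      comap_mono (h1.trans le_sup_left)
    rw [comap_comap'] at h2
    rw [show ⇑(σ2.trans τ1) = ⇑τ1 ∘ ⇑σ2 from rfl]
    exact h2
  · rintro ⟨hx, e, he⟩
    classical
    set fx : Fin k → Quotient x := fun i => Quotient.mk x (Sum.inl i) with hfx
    set gx : Fin k → Quotient x := fun i => Quotient.mk x (Sum.inr i) with hgx
    set fd : Fin k → Quotient d := fun i => Quotient.mk d (Sum.inl i) with hfd
    set gd : Fin k → Quotient d := fun i => Quotient.mk d (Sum.inr i) with hgd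
    obtain ⟨τd, hτd⟩ := exists_equiv_comp gd fd (fun c => (uniform_fibers hd c).symm)
    obtain ⟨τx, hτx⟩ := exists_equiv_comp gx fx (fun c => (uniform_fibers hx c).symm)
    set σ : Fin k → Fin k := ⇑e.symm with hσ
    set u : Fin k → Quotient x := fx ∘ σ ∘ ⇑τd with hu
    have hkd : ∀ i j, fd i = fd j → fx (σ i) = fx (σ j) := by
      intro i j hij
      have h1 : d (Sum.inl i) (Sum.inl j) := Quotient.exact hij
      have h2 : Setoid.comap ⇑e (topPart d) (e.symm i) (e.symm j) := by
        show topPart d (e (e.symm i)) (e (e.symm j))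
        simp only [Equiv.apply_symm_apply]; exact h1
      exact Quotient.sound (he h2)
    have hle : Setoid.ker fd ≤ Setoid.ker (fx ∘ σ) := fun i j hij => hkd i j hij
    have step1 : ubpMul (Setoid.ker (Sum.elim fx (fx ∘ σ))) (Setoid.ker (Sum.elim fd gd))
        = Setoid.ker (Sum.elim fx u) := by
      rw [ubpMul_ker fx (fx ∘ σ) fd gd (fx ∘ σ) fx u
        (sup_of_le_left hle).symm
        (fun t => ⟨e t, by simp [hσ]⟩)
        (fun y => ⟨τd y, (congrFun hτd y).symm⟩)
        (fun t i h => h.symm)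
        (fun y i h => hkd (τd y) i ((congrFun hτd y).symm.trans h.symm)), ker_row13]
    have step2 : ubpMul (Setoid.ker (Sum.elim fx u)) (Setoid.ker (Sum.elim u gx))
        = Setoid.ker (Sum.elim fx gx) := by
      rw [ubpMul_ker fx u u gx u fx gx
        (sup_idem _).symm
        (fun t => ⟨τd.symm (e t), by simp [hu, hσ]⟩)
        (fun y => ⟨τd.symm (e (τx y)), by simp [hu, hσ]; exact (congrFun hτx y).symm⟩)
        (fun t i h => h.symm)
        (fun y i h => h.symm), ker_row13]
    have ha : IsUniform k (Setoid.ker (Sum.elim fx (fx ∘ σ))) := by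
      rw [isUniform_ker_iff]
      intro c
      rw [show (fx ∘ σ) ⁻¹' {c} = ⇑e.symm ⁻¹' (fx ⁻¹' {c}) from rfl, ncard_preimage_equiv]
    have hb : IsUniform k (Setoid.ker (Sum.elim u gx)) := by
      rw [isUniform_ker_iff]
      intro c
      have e1 : u ⁻¹' {c} = ⇑(τd.trans e.symm) ⁻¹' (fx ⁻¹' {c}) := rfl
      have e2 : gx ⁻¹' {c} = ⇑τx ⁻¹' (fx ⁻¹' {c}) :=
        (congrArg (fun F : Fin k → Quotient x => F ⁻¹' {c}) hτx).trans rfl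
      rw [e1, e2, ncard_preimage_equiv, ncard_preimage_equiv]
    refine ⟨Setoid.ker (Sum.elim fx (fx ∘ σ)), Setoid.ker (Sum.elim u gx), ha, hb, ?_⟩
    conv_rhs => rw [setoid_eq_ker d]
    rw [← hfd, ← hgd, step1, step2]
    conv_lhs => rw [setoid_eq_ker x]


lemma part1 {d d' : Setoid (Fin k ⊕ Fin k)} (hd : IsUniform k d) (hd' : IsUniform k d') :
    twoIdeal k d = twoIdeal k d' ↔
      ∀ n : ℕ, {C ∈ (topPart d).classes | C.ncard = n}.ncard
        = {C ∈ (topPart d').classes | C.ncard = n}.ncard := by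
  constructor
  · intro h
    have self_mem : ∀ (c : Setoid (Fin k ⊕ Fin k)), IsUniform k c → c ∈ twoIdeal k c := by
      intro c hc
      rw [mem_twoIdeal_iff hc]
      exact ⟨hc, 1, by rw [Equiv.Perm.coe_one, comap_id']⟩
    have h1 : d' ∈ twoIdeal k d := by rw [h]; exact self_mem d' hd'
    have h2 : d ∈ twoIdeal k d' := by rw [← h]; exact self_mem d hd
    rw [mem_twoIdeal_iff hd] at h1
    rw [mem_twoIdeal_iff hd'] at h2
    obtain ⟨-, e, he⟩ := h1
    obtain ⟨-, e', he'⟩ := h2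
    have hle2 : topPart d' ≤ Setoid.comap ⇑e'.symm (topPart d) := by
      have := comap_mono (f := ⇑e'.symm) he'
      rw [comap_comap'] at this
      have heq : Setoid.comap (⇑e' ∘ ⇑e'.symm) (topPart d') = topPart d' := by
        rw [show ⇑e' ∘ ⇑e'.symm = id from funext fun i => e'.apply_symm_apply i, comap_id']
      rwa [heq] at this
    have hc1 : Nat.card (Quotient (topPart d'))
        ≤ Nat.card (Quotient (Setoid.comap ⇑e (topPart d))) := card_quot_le he
    have hc2 : Nat.card (Quotient (Setoid.comap ⇑e'.symm (topPart d)))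
        ≤ Nat.card (Quotient (topPart d')) := card_quot_le hle2
    rw [card_quot_comap_equiv] at hc1 hc2
    have heq : Setoid.comap ⇑e (topPart d) = topPart d' :=
      setoid_eq_of_le_of_card_le he (by rw [card_quot_comap_equiv]; exact le_antisymm hc1 hc2 ▸ le_refl _)
    intro n
    rw [← heq, classCount_comap_equiv]
  · intro h
    obtain ⟨ρ, hρ⟩ := exists_comap_eq h
    ext x
    show twoIdeal k d x ↔ twoIdeal k d' x
    rw [show (twoIdeal k d x) = (x ∈ twoIdeal k d) from rfl,
      show (twoIdeal k d' x) = (x ∈ twoIdeal k d') from rfl,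
      mem_twoIdeal_iff hd, mem_twoIdeal_iff hd']
    apply and_congr_right
    intro hx
    constructor
    · rintro ⟨e, he⟩
      refine ⟨e.trans ρ.symm, ?_⟩
      rw [← hρ, show ⇑(e.trans ρ.symm) = ⇑ρ.symm ∘ ⇑e from rfl, ← comap_comap']
      have : Setoid.comap ⇑ρ.symm (Setoid.comap ⇑ρ (topPart d)) = topPart d := by
        rw [comap_comap', show ⇑ρ ∘ ⇑ρ.symm = id from funext fun i => ρ.apply_symm_apply i,
          comap_id']
      rwa [this]
    · rintro ⟨e, he⟩
      refine ⟨e.trans ρ, ?_⟩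
      rw [show ⇑(e.trans ρ) = ⇑ρ ∘ ⇑e from rfl, ← comap_comap', hρ]
      exact he

end UBP

section Part2
variable {α β : Type*}

lemma typeMs_pos [Finite α] (s : Setoid α) {n : ℕ} (hn : n ∈ typeMs s) : 0 < n := by
  obtain ⟨C, hC, rfl⟩ := Multiset.mem_map.mp hn
  have hC' : C ∈ s.classes := (Set.Finite.mem_toFinset _).mp hC
  obtain ⟨y, rfl⟩ := hC'
  rw [Set.ncard_pos (Set.toFinite _)]
  exact ⟨y, s.refl' y⟩

lemma typeMs_sum [Fintype α] (s : Setoid α) : (typeMs s).sum = Fintype.card α := by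
  classical
  haveI : Fintype (Quotient s) := Fintype.ofFinite _
  have hT : (Set.toFinite s.classes).toFinset
      = Finset.univ.image (fun q : Quotient s => (Quotient.mk s) ⁻¹' {q}) := by
    ext C
    simp [Set.Finite.mem_toFinset, classes_eq_range s, Set.mem_range, eq_comm]
  have h1 : (typeMs s).sum
      = ∑ C ∈ (Set.toFinite s.classes).toFinset, C.ncard := rfl
  rw [h1, hT, Finset.sum_image (fun a _ b _ h => fiber_injective s h)]
  have h2 : ∀ q : Quotient s, ((Quotient.mk s) ⁻¹' {q}).ncard
      = (Finset.univ.filter (fun i => Quotient.mk s i = q)).card := by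
    intro q
    rw [← Set.ncard_coe_finset]
    congr 1
    ext i
    simp
  calc ∑ q : Quotient s, ((Quotient.mk s) ⁻¹' {q}).ncard
      = ∑ q : Quotient s, (Finset.univ.filter (fun i => Quotient.mk s i = q)).card := by
        simp [h2]
    _ = Finset.univ.card := (Finset.card_eq_sum_card_fiberwise (fun i _ => Finset.mem_univ _)).symm
    _ = Fintype.card α := rfl


def sumTriv (α : Type*) {β : Type*} (s : Setoid β) : Setoid (α ⊕ β) :=
  Setoid.ker (Sum.elim (fun _ : α => (none : Option (Quotient s)))
    (fun b => some (Quotient.mk s b)))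

lemma sumTriv_rel {α β : Type*} (s : Setoid β) (u v : α ⊕ β) :
    (sumTriv α s) u v ↔
      Sum.elim (fun _ : α => (none : Option (Quotient s))) (fun b => some (Quotient.mk s b)) u
      = Sum.elim (fun _ : α => (none : Option (Quotient s))) (fun b => some (Quotient.mk s b)) v :=
  Iff.rfl

lemma sumTriv_class_inl {α β : Type*} (s : Setoid β) (t : α) :
    {u : α ⊕ β | (sumTriv α s) u (Sum.inl t)} = Set.range (Sum.inl : α → α ⊕ β) := by
  ext u
  rw [Set.mem_setOf_eq, sumTriv_rel]
  cases u <;> simp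

lemma sumTriv_class_inr {α β : Type*} (s : Setoid β) (t : β) :
    {u : α ⊕ β | (sumTriv α s) u (Sum.inr t)} = Sum.inr '' {x | s x t} := by
  ext u
  rw [Set.mem_setOf_eq, sumTriv_rel]
  cases u with
  | inl a => simp
  | inr b =>
    simp only [Sum.elim_inr, Option.some.injEq, Set.mem_image]
    constructor
    · intro h
      exact ⟨b, Quotient.exact h, rfl⟩
    · rintro ⟨b', hb', hb⟩
      cases hb
      exact Quotient.sound hb'

lemma classes_sumTriv {α β : Type*} [hne : Nonempty α] (s : Setoid β) :
    (sumTriv α s).classes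
      = insert (Set.range (Sum.inl : α → α ⊕ β)) ((fun C => Sum.inr '' C) '' s.classes) := by
  ext C
  constructor
  · rintro ⟨y, rfl⟩
    cases y with
    | inl t => exact Set.mem_insert_iff.mpr (Or.inl (sumTriv_class_inl s t))
    | inr t =>
      exact Set.mem_insert_iff.mpr (Or.inr ⟨{x | s x t}, ⟨t, rfl⟩, (sumTriv_class_inr s t).symm⟩)
  · intro hC
    rcases Set.mem_insert_iff.mp hC with rfl | ⟨D, ⟨t, rfl⟩, rfl⟩
    · exact ⟨Sum.inl (Classical.arbitrary α), (sumTriv_class_inl s _).symm⟩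
    · exact ⟨Sum.inr t, (sumTriv_class_inr s t).symm⟩

lemma ncard_range_inl {α β : Type*} [Finite α] :
    (Set.range (Sum.inl : α → α ⊕ β)).ncard = Nat.card α := by
  rw [← Nat.card_coe_set_eq]
  exact Nat.card_congr (Equiv.ofInjective _ Sum.inl_injective).symm

lemma typeMs_sumTriv {α β : Type*} [Finite α] [Finite β] [Nonempty α] (s : Setoid β) :
    typeMs (sumTriv α s) = Nat.card α ::ₘ typeMs s := by
  classical
  have h1 : (Set.toFinite (sumTriv α s).classes).toFinset
      = insert (Set.range (Sum.inl : α → α ⊕ β))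
          ((Set.toFinite s.classes).toFinset.image (fun C => Sum.inr '' C)) := by
    ext C
    simp [Set.Finite.mem_toFinset, classes_sumTriv]
  have hnm : (Set.range (Sum.inl : α → α ⊕ β))
      ∉ (Set.toFinite s.classes).toFinset.image (fun C => Sum.inr '' C) := by
    intro hmem
    obtain ⟨D, _, hD⟩ := Finset.mem_image.mp hmem
    have : Sum.inl (Classical.arbitrary α) ∈ (Sum.inr '' D : Set (α ⊕ β)) := by
      rw [hD]; exact ⟨Classical.arbitrary α, rfl⟩
    obtain ⟨b, _, hb⟩ := this
    exact absurd hb (by simp)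
  have hinj : Set.InjOn (fun C : Set β => (Sum.inr '' C : Set (α ⊕ β)))
      ((Set.toFinite s.classes).toFinset : Set (Set β)) :=
    fun C _ D _ h => Set.image_injective.mpr Sum.inr_injective h
  rw [typeMs, h1, Finset.insert_val_of_notMem hnm, Multiset.map_cons,
    Finset.image_val_of_injOn hinj, Multiset.map_map, ncard_range_inl]
  congr 1
  rw [typeMs]
  apply Multiset.map_congr rfl
  intro C _
  exact Set.ncard_image_of_injective C Sum.inr_injective

lemma realize (μ : Multiset ℕ) (hpos : ∀ x ∈ μ, 0 < x) :
    ∀ m : ℕ, μ.sum = m → ∃ s : Setoid (Fin m), typeMs s = μ := by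
  induction μ using Multiset.induction with
  | empty =>
    intro m hm
    have : m = 0 := by simpa using hm.symm
    subst this
    refine ⟨⊥, ?_⟩
    have hcl : (⊥ : Setoid (Fin 0)).classes = ∅ := by
      ext C
      simp only [Set.mem_empty_iff_false, iff_false]
      rintro ⟨y, -⟩
      exact y.elim0
    rw [typeMs]
    rw [show (Set.toFinite (⊥ : Setoid (Fin 0)).classes).toFinset = ∅ by
      simp [Set.Finite.toFinset_eq_empty, hcl]]
    rfl
  | cons a μ ih =>
    intro m hm
    have hμpos : ∀ x ∈ μ, 0 < x := fun x hx => hpos x (Multiset.mem_cons_of_mem hx)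
    obtain ⟨s', hs'⟩ := ih (fun x hx => hpos x (Multiset.mem_cons_of_mem hx)) μ.sum rfl
    have ha : 0 < a := hpos a (Multiset.mem_cons_self a μ)
    have hm' : m = a + μ.sum := by rw [← hm]; simp
    subst hm'
    haveI : Nonempty (Fin a) := ⟨⟨0, ha⟩⟩
    refine ⟨Setoid.comap (⇑(finSumFinEquiv (m := a) (n := μ.sum)).symm) (sumTriv (Fin a) s'), ?_⟩
    rw [typeMs_comap_equiv, typeMs_sumTriv, hs']
    congr 1
    simp [Nat.card_eq_fintype_card]

lemma isUniform_ePart {k : ℕ} (s : Setoid (Fin k)) : IsUniform k (ePart s) := fun _ => rfl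

noncomputable def partOf {k : ℕ} (d : {d : Setoid (Fin k ⊕ Fin k) // IsUniform k d}) :
    Nat.Partition k where
  parts := typeMs (topPart d.1)
  parts_pos := fun hi => typeMs_pos _ hi
  parts_sum := by rw [typeMs_sum]; simp

lemma partOf_surjective {k : ℕ} : Function.Surjective (partOf (k := k)) := by
  intro p
  obtain ⟨s, hs⟩ := realize p.parts (fun x hx => p.parts_pos hx) k p.parts_sum
  refine ⟨⟨ePart s, isUniform_ePart s⟩, ?_⟩
  apply Nat.Partition.ext
  show typeMs (topPart (ePart s)) = p.parts
  rw [show topPart (ePart s) = s from rfl, hs]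

end Part2

/-- `d, d'` generate the same two-sided ideal iff `top(d)` and
`top(d')` have the same type; consequently the `J`-classes of `U_k` are in
bijection with the integer partitions of `k`. -/
theorem ubp_J_classes (k : ℕ) :
    (∀ d d' : Setoid (Fin k ⊕ Fin k), IsUniform k d → IsUniform k d' →
      (twoIdeal k d = twoIdeal k d' ↔
        ∀ n : ℕ, {C ∈ (topPart d).classes | C.ncard = n}.ncard =
          {C ∈ (topPart d').classes | C.ncard = n}.ncard)) ∧
    Nonempty (Quotient (Setoid.ker
        (fun d : {d : Setoid (Fin k ⊕ Fin k) // IsUniform k d} => twoIdeal k d.1)) ≃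
      Nat.Partition k) := by
  refine ⟨fun d d' hd hd' => part1 hd hd', ⟨?_⟩⟩
  have hker : ∀ a b : {d : Setoid (Fin k ⊕ Fin k) // IsUniform k d},
      Setoid.ker (fun d : {d : Setoid (Fin k ⊕ Fin k) // IsUniform k d} => twoIdeal k d.1) a b
        ↔ Setoid.ker partOf a b := by
    intro a b
    rw [Setoid.ker_def, Setoid.ker_def, part1 a.2 b.2]
    constructor
    · intro h
      apply Nat.Partition.ext
      show typeMs (topPart a.1) = typeMs (topPart b.1)
      apply Multiset.ext.mpr
      intro n
      rw [count_typeMs, count_typeMs]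
      exact h n
    · intro h n
      have h' : typeMs (topPart a.1) = typeMs (topPart b.1) := congrArg Nat.Partition.parts h
      rw [← count_typeMs, ← count_typeMs, h']
  exact (Quotient.congrRight hker).trans
    (Setoid.quotientKerEquivOfSurjective partOf partOf_surjective)
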